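/- Let f, g : F_{p^n} → F_p be weakly regular bent functions with duals f*, g* and the same unimodular constant u (p^{−n/2}W_f = u ω^{f*}, p^{−n/2}W_g = u ω^{g*}). Then ∑_{b ∈ F_{p^n}} ω^{f*(b) − g*(b)} = ∑_{x ∈ F_{p^n}} ω^{f(x) − g(x)}. -/

import Mathlib

open Finset
open scoped Classical

noncomputable instance (p n : ℕ) [Fact p.Prime] : Fintype (GaloisField p n) :=
  Fintype.ofFinite _

noncomputable def omg (p : ℕ) : ℂ := Complex.exp (2 * Real.pi * Complex.I / p)

noncomputable def ee (p : ℕ) (c : ZMod p) : ℂ := omg p ^ c.val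

noncomputable def Tr (p n : ℕ) [Fact p.Prime] (x : GaloisField p n) : ZMod p :=
  Algebra.trace (ZMod p) (GaloisField p n) x

noncomputable def W (p n : ℕ) [Fact p.Prime] (f : GaloisField p n → ZMod p)
    (y : GaloisField p n) : ℂ :=
  ∑ x : GaloisField p n, ee p (f x - Tr p n (x * y))

noncomputable def D (p n : ℕ) [Fact p.Prime] (a : GaloisField p n) (f : GaloisField p n → ZMod p)
    (x : GaloisField p n) : ZMod p :=
  f (x + a) - f x

noncomputable def D2 (p n : ℕ) [Fact p.Prime] (a b : GaloisField p n) (f : GaloisField p n → ZMod p)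
    (x : GaloisField p n) : ZMod p :=
  f (x + a + b) - f (x + a) - f (x + b) + f x

def IsBalanced (p n : ℕ) [Fact p.Prime] (f : GaloisField p n → ZMod p) : Prop :=
  ∀ c : ZMod p, (Finset.univ.filter (fun x => f x = c)).card = p ^ (n - 1)

def Bent (p n : ℕ) [Fact p.Prime] (f : GaloisField p n → ZMod p) : Prop :=
  ∀ y : GaloisField p n, ‖W p n f y‖ ^ 2 = (p : ℝ) ^ n

def IsQuadratic (p n : ℕ) [Fact p.Prime] (f : GaloisField p n → ZMod p) : Prop :=
  ∀ a b : GaloisField p n, ∃ c : ZMod p, ∀ x, D2 p n a b f x = c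

def IsCubic (p n : ℕ) [Fact p.Prime] (f : GaloisField p n → ZMod p) : Prop :=
  ∀ a b c : GaloisField p n, ∃ l : ZMod p, ∀ x, D2 p n b c f (x + a) - D2 p n b c f x = l

section lemmas
variable (p : ℕ) [Fact p.Prime]

lemma omg_prim : IsPrimitiveRoot (omg p) p :=
  Complex.isPrimitiveRoot_exp p (Fact.out (p := p.Prime)).ne_zero

lemma omg_pow_p : omg p ^ p = 1 := (omg_prim p).pow_eq_one

lemma omg_pow_mod (m : ℕ) : omg p ^ (m % p) = omg p ^ m := by
  conv_rhs => rw [← Nat.mod_add_div m p]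
  rw [pow_add, pow_mul, omg_pow_p, one_pow, mul_one]

lemma ee_add (a b : ZMod p) : ee p (a + b) = ee p a * ee p b := by
  unfold ee
  rw [ZMod.val_add, omg_pow_mod, pow_add]

lemma ee_zero : ee p 0 = 1 := by
  unfold ee
  simp

lemma ee_neg_mul (c : ZMod p) : ee p c * ee p (-c) = 1 := by
  rw [← ee_add, add_neg_cancel, ee_zero]

lemma ee_conj (c : ZMod p) : (starRingEnd ℂ) (ee p c) = ee p (-c) := by
  have hc : (starRingEnd ℂ) (omg p) = (omg p)⁻¹ := by
    unfold omg
    rw [← Complex.exp_conj, ← Complex.exp_neg]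
    congr 1
    simp only [map_div₀, map_mul, Complex.conj_I, Complex.conj_ofReal, map_ofNat,
      Complex.conj_natCast]
    ring
  have h2 : ee p (-c) = (ee p c)⁻¹ :=
    eq_inv_of_mul_eq_one_left (by rw [mul_comm]; exact ee_neg_mul p c)
  rw [h2]
  unfold ee
  rw [map_pow, hc, inv_pow]

lemma ee_ne_one {t : ZMod p} (ht : t ≠ 0) : ee p t ≠ 1 := by
  unfold ee
  intro h
  have hdvd := ((omg_prim p).pow_eq_one_iff_dvd _).mp h
  have hlt : t.val < p := ZMod.val_lt t
  have hne : t.val ≠ 0 := by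
    simpa [ZMod.val_eq_zero] using ht
  exact absurd (Nat.le_of_dvd (Nat.pos_of_ne_zero hne) hdvd) (not_le.mpr hlt)

lemma ee_sub (a b : ZMod p) : ee p (a - b) = ee p a * ee p (-b) := by
  rw [← ee_add]; ring_nf

end lemmas

section main
variable (p n : ℕ) [Fact p.Prime]

lemma tr_nondeg {c : GaloisField p n} (hc : c ≠ 0) : ∃ a, Tr p n (c * a) ≠ 0 := by
  have htr := (traceForm_nondegenerate (ZMod p) (GaloisField p n)).1 c
  simp_rw [Algebra.traceForm_apply] at htr
  by_contra! hfa
  exact hc (htr hfa)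

lemma sum_ee_tr {c : GaloisField p n} (hc : c ≠ 0) :
    ∑ b : GaloisField p n, ee p (Tr p n (c * b)) = 0 := by
  obtain ⟨a, ha⟩ := tr_nondeg p n hc
  set S := ∑ b : GaloisField p n, ee p (Tr p n (c * b)) with hS
  have hshift : ee p (Tr p n (c * a)) * S = S := by
    rw [hS, Finset.mul_sum]
    have h1 : ∀ b : GaloisField p n,
        ee p (Tr p n (c * a)) * ee p (Tr p n (c * b)) = ee p (Tr p n (c * (a + b))) := by
      intro b
      rw [← ee_add]
      congr 1
      unfold Tr
      rw [mul_add, map_add]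
    simp_rw [h1]
    exact Fintype.sum_equiv (Equiv.addLeft a) _ _ (fun b => by simp)
  have hne : ee p (Tr p n (c * a)) ≠ 1 := ee_ne_one p ha
  have : (ee p (Tr p n (c * a)) - 1) * S = 0 := by ring_nf; linear_combination hshift
  rcases mul_eq_zero.mp this with h | h
  · exact absurd (by linear_combination h) hne
  · exact h

lemma parseval (f g : GaloisField p n → ZMod p) :
    ∑ b : GaloisField p n, W p n f b * (starRingEnd ℂ) (W p n g b) =
      (Fintype.card (GaloisField p n) : ℂ) * ∑ x : GaloisField p n, ee p (f x - g x) := by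
  have step : ∀ b : GaloisField p n, W p n f b * (starRingEnd ℂ) (W p n g b) =
      ∑ x : GaloisField p n, ∑ y : GaloisField p n,
        ee p (f x - g y) * ee p (Tr p n ((y - x) * b)) := by
    intro b
    unfold W
    rw [map_sum, Finset.sum_mul_sum]
    refine Finset.sum_congr rfl fun x _ => Finset.sum_congr rfl fun y _ => ?_
    rw [ee_conj, ← ee_add, ← ee_add]
    congr 1
    have htr : Tr p n ((y - x) * b) = Tr p n (y * b) - Tr p n (x * b) := by
      unfold Tr
      rw [sub_mul, map_sub]
    rw [htr]
    ring
  simp_rw [step]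
  rw [Finset.sum_comm]
  -- now ∑ x ∑ b ∑ y ; want ∑ x ∑ y ∑ b
  have : ∀ x : GaloisField p n,
      (∑ b : GaloisField p n, ∑ y : GaloisField p n,
        ee p (f x - g y) * ee p (Tr p n ((y - x) * b)))
      = (Fintype.card (GaloisField p n) : ℂ) * ee p (f x - g x) := by
    intro x
    rw [Finset.sum_comm]
    rw [Finset.sum_eq_single x]
    · have h0 : ∀ b : GaloisField p n, ee p (Tr p n ((x - x) * b)) = 1 := by
        intro b
        simp [Tr, ee_zero]
      simp_rw [h0, mul_one]
      rw [Finset.sum_const, Finset.card_univ, nsmul_eq_mul, mul_comm]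
    · intro y _ hy
      rw [← Finset.mul_sum, sum_ee_tr p n (sub_ne_zero.mpr hy), mul_zero]
    · intro h
      exact absurd (Finset.mem_univ x) h
  simp_rw [this]
  rw [← Finset.mul_sum]

end main

theorem stmt_15 (p n : ℕ) [Fact p.Prime]
    (f g fstar gstar : GaloisField p n → ZMod p) (u : ℂ) (hu : ‖u‖ = 1)
    (hf : ∀ v : GaloisField p n,
      W p n f v = u * (Real.sqrt ((p : ℝ) ^ n) : ℂ) * ee p (fstar v))
    (hg : ∀ v : GaloisField p n,
      W p n g v = u * (Real.sqrt ((p : ℝ) ^ n) : ℂ) * ee p (gstar v)) :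
    ∑ b : GaloisField p n, ee p (fstar b - gstar b) =
      ∑ x : GaloisField p n, ee p (f x - g x) := by
  set s : ℂ := (Real.sqrt ((p : ℝ) ^ n) : ℂ) with hs
  have hu2 : u * (starRingEnd ℂ) u = 1 := by
    rw [Complex.mul_conj]
    rw [Complex.normSq_eq_norm_sq, hu]
    norm_num
  have hsqC : s * s = (p : ℂ) ^ n := by
    have hr : Real.sqrt ((p:ℝ)^n) * Real.sqrt ((p:ℝ)^n) = (p:ℝ)^n :=
      Real.mul_self_sqrt (by positivity)
    rw [hs, ← Complex.ofReal_mul, hr]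
    push_cast
    ring
  have WW : ∀ (F G Fs Gs : GaloisField p n → ZMod p),
      (∀ v, W p n F v = u * s * ee p (Fs v)) →
      (∀ v, W p n G v = u * s * ee p (Gs v)) →
      ∀ b, W p n F b * (starRingEnd ℂ) (W p n G b) =
        (p : ℂ) ^ n * ee p (Fs b - Gs b) := by
    intro F G Fs Gs hF hG b
    rw [hF b, hG b, map_mul, map_mul, ee_conj]
    have hcs : (starRingEnd ℂ) s = s := by rw [hs, Complex.conj_ofReal]
    rw [hcs, ee_sub]
    linear_combination (s * s * ee p (Fs b) * ee p (-(Gs b))) * hu2 +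
      (ee p (Fs b) * ee p (-(Gs b))) * hsqC
  set q : ℂ := (Fintype.card (GaloisField p n) : ℂ) with hqdef
  have hq0 : q ≠ 0 := by
    rw [hqdef]
    exact_mod_cast Nat.cast_ne_zero.mpr Fintype.card_ne_zero
  have hP0 : ((p : ℂ)) ^ n ≠ 0 := by
    have : (p : ℂ) ≠ 0 := Nat.cast_ne_zero.mpr (Fact.out (p := p.Prime)).ne_zero
    exact pow_ne_zero n this
  -- card = p ^ n, from Parseval with f = f
  have hcard : q = (p : ℂ) ^ n := by
    have h1 := parseval p n f f
    have h2 : ∀ b : GaloisField p n,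
        W p n f b * (starRingEnd ℂ) (W p n f b) = (p : ℂ) ^ n * ee p (fstar b - fstar b) :=
      WW f f fstar fstar hf hf
    simp_rw [h2, sub_self, ee_zero] at h1
    simp only [Finset.sum_const, Finset.card_univ, nsmul_eq_mul, mul_one] at h1
    rw [← hqdef] at h1
    exact mul_left_cancel₀ hq0 (by linear_combination -h1)
  have h1 := parseval p n f g
  have h2 := WW f g fstar gstar hf hg
  simp_rw [h2] at h1
  rw [← Finset.mul_sum, ← hqdef, hcard] at h1
  exact mul_left_cancel₀ hP0 h1
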